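/- arXiv:math/0111059 — 2 statements merged into one kernel-verified Lean document; each statement's English description precedes it below -/
import Mathlib

section
/- For all integers n ≥ k ≥ 1 and every π ∈ P(n,k): mak'(π) = Σ_{i ∈ F_s(π) ∪ P(π)} (k − γ_i(π)) + Σ_{i ∈ O(π)} (k − 1 − l_i(π)) − Σ_{i=1}^{n} #{a ∈ F(π) : a < i}. -/
open Finset Polynomial

/-- A partition of `[n] = {1,…,n}` into `k` nonempty blocks `B₁-⋯-B_k`, indexed so that
`min B₁ < ⋯ < min B_k`, encoded by its restricted-growth word `w : Fin n → Fin k`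
(the element `i+1` of `[n]` lies in the block `B_{w i + 1}`). -/
structure SetPartition (n k : ℕ) where
  w : Fin n → Fin k
  surj : Function.Surjective w
  rgf : ∀ i : Fin n, ∀ c : Fin k, c < w i → ∃ j : Fin n, j < i ∧ w j = c

namespace SetPartition

variable {n k : ℕ}

instance : DecidableEq (SetPartition n k) := fun a b =>
  decidable_of_iff (a.w = b.w) (by cases a; cases b; simp)

noncomputable instance : Fintype (SetPartition n k) :=
  Fintype.ofInjective (fun π => π.w) (fun a b h => by cases a; cases b; simp_all)

/-- The set of openers (smallest elements of their blocks). -/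
def openers (π : SetPartition n k) : Finset (Fin n) :=
  univ.filter fun i => ∀ j, j < i → π.w j ≠ π.w i

/-- The set of closers (largest elements of their blocks). -/
def closers (π : SetPartition n k) : Finset (Fin n) :=
  univ.filter fun i => ∀ j, i < j → π.w j ≠ π.w i

/-- Closers that are not openers (`F_s`). -/
def closersOnly (π : SetPartition n k) : Finset (Fin n) := π.closers \ π.openers

/-- Openers that are not closers (`O_s`). -/
def openersOnly (π : SetPartition n k) : Finset (Fin n) := π.openers \ π.closers

/-- Elements that are neither openers nor closers (`P`, the transients). -/
def transients (π : SetPartition n k) : Finset (Fin n) :=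
  univ \ (π.openers ∪ π.closers)

def ros (π : SetPartition n k) : ℕ :=
  ∑ i, (π.openers.filter fun j => j < i ∧ π.w i < π.w j).card
def rob (π : SetPartition n k) : ℕ :=
  ∑ i, (π.openers.filter fun j => i < j ∧ π.w i < π.w j).card
def rcs (π : SetPartition n k) : ℕ :=
  ∑ i, (π.closers.filter fun j => j < i ∧ π.w i < π.w j).card
def rcb (π : SetPartition n k) : ℕ :=
  ∑ i, (π.closers.filter fun j => i < j ∧ π.w i < π.w j).card
def los (π : SetPartition n k) : ℕ :=
  ∑ i, (π.openers.filter fun j => j < i ∧ π.w j < π.w i).card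
def lob (π : SetPartition n k) : ℕ :=
  ∑ i, (π.openers.filter fun j => i < j ∧ π.w j < π.w i).card
def lcs (π : SetPartition n k) : ℕ :=
  ∑ i, (π.closers.filter fun j => j < i ∧ π.w j < π.w i).card
def lcb (π : SetPartition n k) : ℕ :=
  ∑ i, (π.closers.filter fun j => i < j ∧ π.w j < π.w i).card

def mak (π : SetPartition n k) : ℕ := π.ros + π.lcs
def mak' (π : SetPartition n k) : ℕ := π.lob + π.rcb
def lmak (π : SetPartition n k) : ℤ :=
  (n : ℤ) * ((k : ℤ) - 1) - ((π.los : ℤ) + (π.rcs : ℤ))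
def lmak' (π : SetPartition n k) : ℤ :=
  (n : ℤ) * ((k : ℤ) - 1) - ((π.lcb : ℤ) + (π.rob : ℤ))

/-- `rinv(b,π) = #{a : a < b, w_a > w_b}`. -/
def rinv (π : SetPartition n k) (b : Fin n) : ℕ :=
  (univ.filter fun a => a < b ∧ π.w b < π.w a).card

/-- `nrinv(b,π) = #{a : a > b, w_a > w_b}`. -/
def nrinv (π : SetPartition n k) (b : Fin n) : ℕ :=
  (univ.filter fun a => b < a ∧ π.w b < π.w a).card

/-- `linv(b,π) = #{a : a > b, w_a < w_b}`. -/
def linv (π : SetPartition n k) (b : Fin n) : ℕ :=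
  (univ.filter fun a => b < a ∧ π.w a < π.w b).card

/-- `rinv(X,π) = Σ_{b ∈ X} rinv(b,π)`. -/
def rinvSet (π : SetPartition n k) (X : Finset (Fin n)) : ℕ := ∑ b ∈ X, π.rinv b

/-- `linv(X,π) = Σ_{b ∈ X} linv(b,π)`. -/
def linvSet (π : SetPartition n k) (X : Finset (Fin n)) : ℕ := ∑ b ∈ X, π.linv b

/-- `g(B_c)`: the largest element of the block with index `c`. -/
def blockMax (π : SetPartition n k) (c : Fin k) : Fin n :=
  (univ.filter fun i => π.w i = c).max' (by
    obtain ⟨i, hi⟩ := π.surj c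
    exact ⟨i, mem_filter.2 ⟨mem_univ i, hi⟩⟩)

/-- The block with index `c` is incomplete at stage `m`, i.e. it meets the first `m`
elements of `[n]` but is not contained in them. -/
def IncompleteAt (π : SetPartition n k) (m : ℕ) (c : Fin k) : Prop :=
  (∃ j : Fin n, (j : ℕ) < m ∧ π.w j = c) ∧ ∃ j : Fin n, m ≤ (j : ℕ) ∧ π.w j = c

instance (π : SetPartition n k) (m : ℕ) : DecidablePred (π.IncompleteAt m) := fun c =>
  inferInstanceAs (Decidable
    ((∃ j : Fin n, (j : ℕ) < m ∧ π.w j = c) ∧ ∃ j : Fin n, m ≤ (j : ℕ) ∧ π.w j = c))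

/-- `l_i(π)`: the number of blocks incomplete at stage `i-1`; here the element `i` of `[n]`
is represented by the index `i - 1 : Fin n`, so the first `i - 1` elements are those with
index `< i`. -/
def lTrace (π : SetPartition n k) (i : Fin n) : ℕ :=
  (univ.filter fun c => π.IncompleteAt (i : ℕ) c).card

/-- `γ_i(π)`: one plus the number of blocks incomplete at stage `i` lying to the left of the
block containing `i`. -/
def gammaTrace (π : SetPartition n k) (i : Fin n) : ℕ :=
  1 + (univ.filter fun c => π.IncompleteAt ((i : ℕ) + 1) c ∧ c < π.w i).card

end SetPartition
namespace SetPartition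

variable {n k : ℕ} (π : SetPartition n k)

lemma mem_openers' {i : Fin n} : i ∈ π.openers ↔ ∀ j, j < i → π.w j ≠ π.w i := by
  simp [openers]

lemma mem_closers' {i : Fin n} : i ∈ π.closers ↔ ∀ j, i < j → π.w j ≠ π.w i := by
  simp [closers]

lemma opener_lt {i j : Fin n} (hj : j ∈ π.openers) (h : π.w j < π.w i) : j < i := by
  obtain ⟨j', hj'i, hj'⟩ := π.rgf i (π.w j) h
  rcases lt_trichotomy j j' with h1 | rfl | h1
  · exact h1.trans hj'i
  · exact hj'i
  · exact absurd hj' ((π.mem_openers').mp hj j' h1)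

lemma blockMax_mem (c : Fin k) : π.blockMax c ∈ univ.filter fun i => π.w i = c :=
  Finset.max'_mem _ _

lemma w_blockMax (c : Fin k) : π.w (π.blockMax c) = c :=
  (mem_filter.mp (π.blockMax_mem c)).2

lemma le_blockMax {c : Fin k} {j : Fin n} (h : π.w j = c) : j ≤ π.blockMax c := by
  apply Finset.le_max'
  exact mem_filter.2 ⟨mem_univ _, h⟩

lemma blockMax_mem_closers (c : Fin k) : π.blockMax c ∈ π.closers := by
  rw [mem_closers']
  intro j hlt heq
  have hc : π.w j = c := by rw [heq, π.w_blockMax]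
  exact absurd (π.le_blockMax hc) (not_le.mpr hlt)

lemma closer_eq_blockMax {i : Fin n} (h : i ∈ π.closers) : π.blockMax (π.w i) = i := by
  have h1 := π.le_blockMax (c := π.w i) rfl
  rcases lt_or_eq_of_le h1 with h2 | h2
  · exact absurd (π.w_blockMax (π.w i)) ((π.mem_closers').mp h _ h2)
  · exact h2.symm

lemma card_closers_filter (p : Fin n → Prop) [DecidablePred p] :
    (π.closers.filter p).card = (univ.filter fun c : Fin k => p (π.blockMax c)).card := by
  apply Finset.card_bij (fun i _ => π.w i)
  · intro i hi
    simp only [mem_filter, mem_univ, true_and] at hi ⊢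
    rw [π.closer_eq_blockMax hi.1]; exact hi.2
  · intro a ha b hb hab
    simp only [mem_filter] at ha hb
    rw [← π.closer_eq_blockMax ha.1, ← π.closer_eq_blockMax hb.1, hab]
  · intro c hc
    simp only [mem_filter, mem_univ, true_and] at hc
    exact ⟨π.blockMax c, mem_filter.2 ⟨π.blockMax_mem_closers c, hc⟩, π.w_blockMax c⟩

lemma lob_filter_empty (i : Fin n) :
    (π.openers.filter fun j => i < j ∧ π.w j < π.w i) = ∅ := by
  rw [filter_eq_empty_iff]
  rintro j hj ⟨h1, h2⟩
  exact absurd (π.opener_lt hj h2) (lt_asymm h1)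

lemma lob_eq_zero : π.lob = 0 := by
  simp [lob, lob_filter_empty]

lemma card_lt_add_card_gt (a : Fin k) :
    (univ.filter fun c : Fin k => c < a).card + (univ.filter fun c : Fin k => a < c).card + 1
      = k := by
  have h1 : (univ.filter fun c : Fin k => c < a) = Finset.Iio a := by ext c; simp
  have h2 : (univ.filter fun c : Fin k => a < c) = Finset.Ioi a := by ext c; simp
  rw [h1, h2, Fin.card_Iio, Fin.card_Ioi]
  omega

/-- `blockMax (π.w i) ≥ i`. -/
lemma le_blockMax_self (i : Fin n) : i ≤ π.blockMax (π.w i) := π.le_blockMax rfl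

lemma blockMax_ne (i : Fin n) {c : Fin k} (hc : c ≠ π.w i) : π.blockMax c ≠ i := by
  intro h
  apply hc
  rw [← h, π.w_blockMax]

end SetPartition

namespace SetPartition

variable {n k : ℕ} (π : SetPartition n k)

lemma split_card (q p : Fin k → Prop) [DecidablePred q] [DecidablePred p] :
    (univ.filter fun c => q c ∧ p c).card + (univ.filter fun c => q c ∧ ¬ p c).card
      = (univ.filter q).card := by
  rw [← filter_filter, ← filter_filter]
  exact card_filter_add_card_filter_not _

lemma rcb_card (i : Fin n) :
    (π.closers.filter fun j => i < j ∧ π.w i < π.w j).card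
      = (univ.filter fun c : Fin k => i < π.blockMax c ∧ π.w i < c).card := by
  rw [π.card_closers_filter (fun j => i < j ∧ π.w i < π.w j)]
  simp only [π.w_blockMax]

lemma cls_card (i : Fin n) :
    (π.closers.filter fun a => a < i).card
      = (univ.filter fun c : Fin k => π.blockMax c < i).card := by
  rw [π.card_closers_filter (fun a => a < i)]

/-- The general split of the `rcb` count. -/
lemma rcb_split (i : Fin n) :
    (univ.filter fun c : Fin k => i < π.blockMax c ∧ π.w i < c).card
      + (univ.filter fun c : Fin k => π.w i < c ∧ π.blockMax c < i).card
      = (univ.filter fun c : Fin k => π.w i < c).card := by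
  have h := split_card (fun c => π.w i < c) (fun c => i < π.blockMax c)
  have e1 : (univ.filter fun c : Fin k => π.w i < c ∧ i < π.blockMax c)
      = univ.filter fun c : Fin k => i < π.blockMax c ∧ π.w i < c := by
    apply filter_congr; intro c _; exact and_comm
  have e2 : (univ.filter fun c : Fin k => π.w i < c ∧ ¬ i < π.blockMax c)
      = univ.filter fun c : Fin k => π.w i < c ∧ π.blockMax c < i := by
    apply filter_congr; intro c _
    constructor
    · rintro ⟨h1, h2⟩
      refine ⟨h1, lt_of_le_of_ne (not_lt.mp h2) (π.blockMax_ne i (ne_of_gt h1))⟩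
    · rintro ⟨h1, h2⟩; exact ⟨h1, not_lt.mpr h2.le⟩
  rw [e1, e2] at h
  exact h

/-- The split of the closers-before-`i` count. -/
lemma cls_split (i : Fin n) :
    (univ.filter fun c : Fin k => c < π.w i ∧ π.blockMax c < i).card
      + (univ.filter fun c : Fin k => π.w i < c ∧ π.blockMax c < i).card
      = (univ.filter fun c : Fin k => π.blockMax c < i).card := by
  have h := split_card (fun c => π.blockMax c < i) (fun c => c < π.w i)
  have e1 : (univ.filter fun c : Fin k => π.blockMax c < i ∧ c < π.w i)
      = univ.filter fun c : Fin k => c < π.w i ∧ π.blockMax c < i := by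
    apply filter_congr; intro c _; exact and_comm
  have e2 : (univ.filter fun c : Fin k => π.blockMax c < i ∧ ¬ c < π.w i)
      = univ.filter fun c : Fin k => π.w i < c ∧ π.blockMax c < i := by
    apply filter_congr; intro c _
    constructor
    · rintro ⟨h1, h2⟩
      have hne : c ≠ π.w i := by
        rintro rfl
        exact absurd (π.le_blockMax_self i) (not_le.mpr h1)
      exact ⟨lt_of_le_of_ne (not_lt.mp h2) (Ne.symm hne), h1⟩
    · rintro ⟨h1, h2⟩; exact ⟨h2, not_lt.mpr h1.le⟩
  rw [e1, e2] at h
  exact h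

/-- The `γ` filter in terms of `blockMax`. -/
lemma gamma_filter (i : Fin n) :
    (univ.filter fun c : Fin k => π.IncompleteAt ((i : ℕ) + 1) c ∧ c < π.w i)
      = univ.filter fun c : Fin k => c < π.w i ∧ ¬ π.blockMax c < i := by
  apply filter_congr; intro c _
  constructor
  · rintro ⟨⟨_, j, hj, hw⟩, hc⟩
    refine ⟨hc, ?_⟩
    intro hbm
    have h1 := Fin.le_def.mp (π.le_blockMax hw)
    have h2 := Fin.lt_def.mp hbm
    omega
  · rintro ⟨hc, hbm⟩
    obtain ⟨j, hji, hw⟩ := π.rgf i c hc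
    have hne : (π.blockMax c : ℕ) ≠ (i : ℕ) := by
      intro h
      exact π.blockMax_ne i (ne_of_lt hc) (Fin.ext h)
    have hge := Fin.le_def.mp (not_lt.mp hbm)
    refine ⟨⟨⟨j, by have := Fin.lt_def.mp hji; omega, hw⟩,
      ⟨π.blockMax c, by omega, π.w_blockMax c⟩⟩, hc⟩

/-- **Key identity, general case**: `rcb_i + γ_i + cls_i = k`. -/
lemma gamma_key (i : Fin n) :
    (π.closers.filter fun j => i < j ∧ π.w i < π.w j).card + π.gammaTrace i
      + (π.closers.filter fun a => a < i).card = k := by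
  rw [π.rcb_card, π.cls_card]
  unfold gammaTrace
  rw [π.gamma_filter]
  have h1 := π.rcb_split i
  have h2 := π.cls_split i
  have h3 := split_card (fun c => c < π.w i) (fun c => π.blockMax c < i)
  have h4 := card_lt_add_card_gt (π.w i)
  omega

lemma opener_rcb {i : Fin n} (hi : i ∈ π.openers) :
    (univ.filter fun c : Fin k => i < π.blockMax c ∧ π.w i < c)
      = univ.filter fun c : Fin k => π.w i < c := by
  apply filter_congr; intro c _
  constructor
  · exact And.right
  · intro h
    exact ⟨π.opener_lt hi (by rw [π.w_blockMax]; exact h), h⟩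

lemma opener_lTrace {i : Fin n} (hi : i ∈ π.openers) :
    π.lTrace i = (univ.filter fun c : Fin k => c < π.w i ∧ ¬ π.blockMax c < i).card := by
  unfold lTrace
  congr 1
  apply filter_congr; intro c _
  constructor
  · rintro ⟨⟨j1, hj1, hw1⟩, ⟨j2, hj2, hw2⟩⟩
    have hc : c < π.w i := by
      rcases lt_trichotomy c (π.w i) with h | h | h
      · exact h
      · subst h
        exact absurd hw1 (π.mem_openers'.mp hi j1 (Fin.lt_def.mpr hj1))
      · have := Fin.lt_def.mp (π.opener_lt hi (show π.w i < π.w j1 by rw [hw1]; exact h))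
        omega
    refine ⟨hc, ?_⟩
    intro hbm
    have h1 := Fin.le_def.mp (π.le_blockMax hw2)
    have h2 := Fin.lt_def.mp hbm
    omega
  · rintro ⟨hc, hbm⟩
    obtain ⟨j, hji, hw⟩ := π.rgf i c hc
    exact ⟨⟨j, Fin.lt_def.mp hji, hw⟩,
      ⟨π.blockMax c, Fin.le_def.mp (not_lt.mp hbm), π.w_blockMax c⟩⟩

lemma opener_cls {i : Fin n} (hi : i ∈ π.openers) :
    (univ.filter fun c : Fin k => π.blockMax c < i)
      = univ.filter fun c : Fin k => c < π.w i ∧ π.blockMax c < i := by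
  apply filter_congr; intro c _
  constructor
  · intro h
    refine ⟨?_, h⟩
    rcases lt_trichotomy c (π.w i) with h1 | h1 | h1
    · exact h1
    · subst h1
      exact absurd (π.le_blockMax_self i) (not_le.mpr h)
    · exact absurd (π.opener_lt hi (by rw [π.w_blockMax]; exact h1)) (lt_asymm h)
  · exact And.right

/-- **Key identity, opener case**: `rcb_i + 1 + l_i + cls_i = k`. -/
lemma opener_key {i : Fin n} (hi : i ∈ π.openers) :
    (π.closers.filter fun j => i < j ∧ π.w i < π.w j).card + 1 + π.lTrace i
      + (π.closers.filter fun a => a < i).card = k := by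
  rw [π.rcb_card, π.cls_card, π.opener_rcb hi, π.opener_lTrace hi, π.opener_cls hi]
  have h3 := split_card (fun c => c < π.w i) (fun c => π.blockMax c < i)
  have h4 := card_lt_add_card_gt (π.w i)
  omega

end SetPartition

/-- The `q`-Stirling numbers of the second kind `S_q(n,k) ∈ ℤ[q]`, with
`S_q(n,k) = q^{k-1} S_q(n-1,k-1) + [k]_q S_q(n-1,k)`, `S_q(0,0) = 1`, and
`S_q(n,k) = 0` when exactly one of `n,k` is zero (whence also for `k > n`). -/
noncomputable def qStirling : ℕ → ℕ → Polynomial ℤ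
  | 0, 0 => 1
  | 0, _ + 1 => 0
  | _ + 1, 0 => 0
  | n + 1, k + 1 =>
      X ^ k * qStirling n k + (∑ i ∈ Finset.range (k + 1), X ^ i) * qStirling n (k + 1)

/-- For all integers `n ≥ k ≥ 1` and every `π ∈ P(n,k)`:
`mak'(π) = Σ_{i ∈ F_s(π) ∪ P(π)} (k - γ_i(π)) + Σ_{i ∈ O(π)} (k - 1 - l_i(π))
           - Σ_{i=1}^n #{a ∈ F(π) : a < i}`. -/
theorem mak'_eq_trace_formula (n k : ℕ) (hk : 1 ≤ k) (hkn : k ≤ n) (π : SetPartition n k) :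
    (π.mak' : ℤ) =
      (∑ i ∈ π.closersOnly ∪ π.transients, ((k : ℤ) - (π.gammaTrace i : ℤ))) +
      (∑ i ∈ π.openers, ((k : ℤ) - 1 - (π.lTrace i : ℤ))) -
      ∑ i : Fin n, ((π.closers.filter fun a => a < i).card : ℤ) := by
  have hsets : π.closersOnly ∪ π.transients = univ \ π.openers := by
    ext i
    simp only [SetPartition.closersOnly, SetPartition.transients, mem_union, mem_sdiff,
      mem_univ, true_and]
    tauto
  have hmak : (π.mak' : ℤ)
      = ∑ i : Fin n, ((π.closers.filter fun j => i < j ∧ π.w i < π.w j).card : ℤ) := by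
    unfold SetPartition.mak' SetPartition.rcb
    rw [π.lob_eq_zero]
    push_cast
    ring
  have hG : ∀ i : Fin n, ((π.closers.filter fun j => i < j ∧ π.w i < π.w j).card : ℤ)
      = (k : ℤ) - (π.gammaTrace i : ℤ) - ((π.closers.filter fun a => a < i).card : ℤ) := by
    intro i
    have := π.gamma_key i
    omega
  have hO : ∀ i ∈ π.openers, ((π.closers.filter fun j => i < j ∧ π.w i < π.w j).card : ℤ)
      = (k : ℤ) - 1 - (π.lTrace i : ℤ) - ((π.closers.filter fun a => a < i).card : ℤ) := by
    intro i hi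
    have := π.opener_key hi
    omega
  rw [hsets, hmak]
  rw [← Finset.sum_sdiff (subset_univ π.openers)]
  have hcls : ∑ i : Fin n, ((π.closers.filter fun a => a < i).card : ℤ)
      = ∑ i ∈ univ \ π.openers, ((π.closers.filter fun a => a < i).card : ℤ)
        + ∑ i ∈ π.openers, ((π.closers.filter fun a => a < i).card : ℤ) :=
    (Finset.sum_sdiff (subset_univ π.openers)).symm
  rw [hcls]
  rw [Finset.sum_congr rfl (fun i _ => hG i), Finset.sum_congr rfl hO]
  rw [Finset.sum_sub_distrib, Finset.sum_sub_distrib, Finset.sum_sub_distrib,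
    Finset.sum_sub_distrib]
  ring
end

section
/- For all integers n ≥ k ≥ 1 and every π ∈ P(n,k): mak(π) = los(π) − rinv(F(π),π) + linv(O(π),π). -/
open Finset Polynomial

namespace SetPartition

variable {n k : ℕ}

lemma sum_swap_card {s : Finset (Fin n)} {p : Fin n → Fin n → Prop} [DecidableRel p] :
    ∑ i : Fin n, (s.filter fun j => p j i).card
      = ∑ j ∈ s, (univ.filter fun i => p j i).card := by
  simp_rw [Finset.card_filter]
  exact Finset.sum_comm

lemma opener_inj {π : SetPartition n k} {a b : Fin n} (ha : a ∈ π.openers)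
    (hb : b ∈ π.openers) (h : π.w a = π.w b) : a = b := by
  simp only [openers, mem_filter, mem_univ, true_and] at ha hb
  rcases lt_trichotomy a b with h1 | h1 | h1
  · exact absurd h (hb a h1)
  · exact h1
  · exact absurd h.symm (ha b h1)

lemma closer_inj {π : SetPartition n k} {a b : Fin n} (ha : a ∈ π.closers)
    (hb : b ∈ π.closers) (h : π.w a = π.w b) : a = b := by
  simp only [closers, mem_filter, mem_univ, true_and] at ha hb
  rcases lt_trichotomy a b with h1 | h1 | h1
  · exact absurd h.symm (ha b h1)
  · exact h1
  · exact absurd h (hb a h1)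

lemma exists_opener (π : SetPartition n k) (c : Fin k) :
    ∃ m : Fin n, m ∈ π.openers ∧ π.w m = c ∧ ∀ j, π.w j = c → m ≤ j := by
  obtain ⟨i0, hi0⟩ := π.surj c
  have hne : (univ.filter fun j => π.w j = c).Nonempty :=
    ⟨i0, mem_filter.2 ⟨mem_univ _, hi0⟩⟩
  set m := (univ.filter fun j => π.w j = c).min' hne with hm
  have hmem := (univ.filter fun j => π.w j = c).min'_mem hne
  have hwm : π.w m = c := (mem_filter.1 hmem).2
  have hmin : ∀ j, π.w j = c → m ≤ j := fun j hj =>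
    Finset.min'_le _ j (mem_filter.2 ⟨mem_univ j, hj⟩)
  refine ⟨m, ?_, hwm, hmin⟩
  simp only [openers, mem_filter, mem_univ, true_and]
  intro j hj hcon
  exact absurd (hmin j (hcon.trans hwm)) (not_le.2 hj)

lemma exists_closer (π : SetPartition n k) (c : Fin k) :
    ∃ m : Fin n, m ∈ π.closers ∧ π.w m = c := by
  obtain ⟨i0, hi0⟩ := π.surj c
  have hne : (univ.filter fun j => π.w j = c).Nonempty :=
    ⟨i0, mem_filter.2 ⟨mem_univ _, hi0⟩⟩
  set m := (univ.filter fun j => π.w j = c).max' hne with hm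
  have hmem := (univ.filter fun j => π.w j = c).max'_mem hne
  have hwm : π.w m = c := (mem_filter.1 hmem).2
  refine ⟨m, ?_, hwm⟩
  simp only [closers, mem_filter, mem_univ, true_and]
  intro j hj hcon
  exact absurd (Finset.le_max' _ j (mem_filter.2 ⟨mem_univ _, hcon.trans hwm⟩))
    (not_le.2 hj)

lemma card_closers_lt (π : SetPartition n k) (v : Fin k) :
    ((π.closers.filter fun j => π.w j < v).card) = (v : ℕ) := by
  rw [← Finset.card_range (v : ℕ)]
  apply Finset.card_bij (fun j _ => ((π.w j : ℕ)))
  · intro a ha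
    simpa using (mem_filter.1 ha).2
  · intro a ha b hb hab
    exact closer_inj (mem_filter.1 ha).1 (mem_filter.1 hb).1 (Fin.val_injective hab)
  · intro c hc
    simp only [Finset.mem_range] at hc
    obtain ⟨m, hm, hwm⟩ := π.exists_closer ⟨c, lt_trans hc v.isLt⟩
    refine ⟨m, mem_filter.2 ⟨hm, ?_⟩, by simp [hwm]⟩
    rw [hwm]; exact hc

lemma card_openers_lt (π : SetPartition n k) (i : Fin n) :
    ((π.openers.filter fun j => j < i ∧ π.w j < π.w i).card) = ((π.w i : ℕ)) := by
  rw [← Finset.card_range ((π.w i : ℕ))]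
  apply Finset.card_bij (fun j _ => ((π.w j : ℕ)))
  · intro a ha
    simpa using (mem_filter.1 ha).2.2
  · intro a ha b hb hab
    exact opener_inj (mem_filter.1 ha).1 (mem_filter.1 hb).1 (Fin.val_injective hab)
  · intro c hc
    simp only [Finset.mem_range] at hc
    have hck : c < k := lt_trans hc (π.w i).isLt
    have hcv : (⟨c, hck⟩ : Fin k) < π.w i := hc
    obtain ⟨m, hm, hwm, hmin⟩ := π.exists_opener ⟨c, hck⟩
    obtain ⟨j0, hj0, hwj0⟩ := π.rgf i ⟨c, hck⟩ hcv
    refine ⟨m, mem_filter.2 ⟨hm, lt_of_le_of_lt (hmin j0 hwj0) hj0, ?_⟩, by simp [hwm]⟩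
    rw [hwm]; exact hcv

end SetPartition

/-- For all integers `n ≥ k ≥ 1` and every `π ∈ P(n,k)`:
`mak(π) = los(π) - rinv(F(π),π) + linv(O(π),π)`. -/
theorem mak_eq_los_rinv_linv (n k : ℕ) (hk : 1 ≤ k) (hkn : k ≤ n) (π : SetPartition n k) :
    (π.mak : ℤ) = (π.los : ℤ) - (π.rinvSet π.closers : ℤ) + (π.linvSet π.openers : ℤ) := by
  have h1 : π.ros = π.linvSet π.openers := by
    unfold SetPartition.ros SetPartition.linvSet SetPartition.linv
    exact SetPartition.sum_swap_card (p := fun j i => j < i ∧ π.w i < π.w j)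
  have h2 : π.rinvSet π.closers
      = ∑ i, (π.closers.filter fun j => i < j ∧ π.w j < π.w i).card := by
    unfold SetPartition.rinvSet SetPartition.rinv
    exact (SetPartition.sum_swap_card (p := fun j i => i < j ∧ π.w j < π.w i)).symm
  have h3 : π.lcs + π.rinvSet π.closers = ∑ i, ((π.w i : ℕ)) := by
    unfold SetPartition.lcs
    rw [h2, ← Finset.sum_add_distrib]
    refine Finset.sum_congr rfl fun i _ => ?_
    rw [← π.card_closers_lt (π.w i)]
    rw [← Finset.card_union_of_disjoint]
    · congr 1
      rw [← Finset.filter_or]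
      refine Finset.filter_congr fun j hj => ?_
      constructor
      · rintro (⟨_, h⟩ | ⟨_, h⟩) <;> exact h
      · intro h
        rcases lt_trichotomy j i with h' | h' | h'
        · exact Or.inl ⟨h', h⟩
        · exact absurd h (by simp [h'])
        · exact Or.inr ⟨h', h⟩
    · rw [Finset.disjoint_left]
      rintro j hj hj'
      exact absurd ((mem_filter.1 hj).2.1.trans (mem_filter.1 hj').2.1) (lt_irrefl j)
  have h4 : π.los = ∑ i, ((π.w i : ℕ)) := by
    unfold SetPartition.los
    exact Finset.sum_congr rfl fun i _ => π.card_openers_lt i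
  have key : π.ros + π.lcs + π.rinvSet π.closers = π.los + π.linvSet π.openers := by
    rw [h1, h4, Nat.add_assoc, h3]; ring
  have : (π.mak : ℤ) + π.rinvSet π.closers = π.los + π.linvSet π.openers := by
    unfold SetPartition.mak; push_cast; exact_mod_cast congrArg (Nat.cast : ℕ → ℤ) key
  linarith
end
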